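/- Let T be a non-degenerate rooted phylogenetic X-tree, σ a total order on X, and f the cluster marker map for T and σ. Then the graph Γ(L_{(T,f)}) is a connected block graph, every block of Γ(L_{(T,f)}) is of the form Γ(L_{(T,f)}(v)) for some interior vertex v, and Γ(L_{(T,f)}) is claw-free; i.e., L_{(T,f)} is a distinguished minimal topological lasso for T. -/

import Mathlib

open scoped Classical

/-- A rooted `X`-tree on vertex type `V`: a finite rooted tree encoded by a parent
function, whose leaves (the vertices with no children) are bijectively labelled by `X`. -/
structure XTree (X V : Type) where
  root : V
  parent : V → V
  parent_root : parent root = root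
  reaches : ∀ v : V, ∃ n : ℕ, parent^[n] v = root
  leaf : X → V
  leaf_inj : Function.Injective leaf
  leaf_iff : ∀ v : V, (∀ w : V, parent w = v → w = v) ↔ v ∈ Set.range leaf

namespace XTree

variable {X V : Type}

/-- The children of a vertex. -/
def children (T : XTree X V) (v : V) : Set V := {w | T.parent w = v ∧ w ≠ v}

def IsLeaf (T : XTree X V) (v : V) : Prop := v ∈ Set.range T.leaf

def Interior (T : XTree X V) (v : V) : Prop := ¬ T.IsLeaf v

/-- Phylogenetic: root has at least two children, and no non-root vertex has exactly
one child (no degree-two vertices apart from possibly the root). -/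
def IsPhylo (T : XTree X V) : Prop :=
  2 ≤ (T.children T.root).ncard ∧
    ∀ v : V, v ≠ T.root → T.Interior v → 2 ≤ (T.children v).ncard

/-- `T.Desc v w` : `w` is a descendant of `v` (or equal to `v`). -/
def Desc (T : XTree X V) (v w : V) : Prop := ∃ n : ℕ, T.parent^[n] w = v

/-- The set of leaf labels below a vertex. -/
def leafSet (T : XTree X V) (v : V) : Set X := {x | T.Desc v (T.leaf x)}

/-- `v` is the last common ancestor of the set `S` of vertices. -/
def IsLCA (T : XTree X V) (v : V) (S : Set V) : Prop :=
  (∀ w ∈ S, T.Desc v w) ∧ ∀ u : V, (∀ w ∈ S, T.Desc u w) → T.Desc u v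

/-- Not a star tree: some interior vertex other than the root. -/
def NonDegenerate (T : XTree X V) : Prop := ∃ v : V, T.Interior v ∧ v ≠ T.root

end XTree

/-- A cord: a 2-element subset of `X`. -/
def IsCord {X : Type} (c : Set X) : Prop := ∃ a b : X, a ≠ b ∧ c = {a, b}

/-- The graph `Γ(L)` with vertex set `X` and edge set `L`. -/
def cordGraph {X : Type} (L : Set (Set X)) : SimpleGraph X where
  Adj a b := a ≠ b ∧ ({a, b} : Set X) ∈ L
  symm := by
    constructor
    intro a b h
    exact ⟨Ne.symm h.1, by rw [Set.pair_comm]; exact h.2⟩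
  loopless := by constructor; intro a h; exact h.1 rfl

/-- Topological lasso, via the child-edge graph characterization: for every interior
vertex, any two distinct child subtrees are joined by a cord of `L`. -/
def XTree.IsTopoLasso {X V : Type} (T : XTree X V) (L : Set (Set X)) : Prop :=
  ∀ v c₁ c₂ : V, c₁ ∈ T.children v → c₂ ∈ T.children v → c₁ ≠ c₂ →
    ∃ a b : X, a ∈ T.leafSet c₁ ∧ b ∈ T.leafSet c₂ ∧ ({a, b} : Set X) ∈ L

/-- Set-inclusion minimal topological lasso. -/
def XTree.IsMinTopoLasso {X V : Type} (T : XTree X V) (L : Set (Set X)) : Prop :=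
  T.IsTopoLasso L ∧ ∀ L' ⊆ L, T.IsTopoLasso L' → L' = L

/-- A nonempty vertex set inducing a connected subgraph with no cut vertex. -/
def GoodSet {α : Type} (G : SimpleGraph α) (B : Set α) : Prop :=
  B.Nonempty ∧ (G.induce B).Connected ∧
    ∀ v ∈ B, (B \ {v}).Nonempty → (G.induce (B \ {v})).Connected

/-- A block: a maximal connected induced subgraph without a cut vertex. -/
def IsBlock {α : Type} (G : SimpleGraph α) (B : Set α) : Prop :=
  GoodSet G B ∧ ∀ C : Set α, GoodSet G C → B ⊆ C → B = C

/-- A block graph: every block is a clique. -/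
def IsBlockGraph {α : Type} (G : SimpleGraph α) : Prop :=
  ∀ B : Set α, IsBlock G B → G.IsClique B

/-- A cut vertex: deleting it disconnects the graph. -/
def IsCutVtx {α : Type} (G : SimpleGraph α) (v : α) : Prop :=
  ¬ (G.induce {w | w ≠ v}).Connected

/-- Claw-free: no induced `K_{1,3}`. -/
def ClawFree {α : Type} (G : SimpleGraph α) : Prop :=
  ¬ ∃ v a b c : α, a ≠ b ∧ a ≠ c ∧ b ≠ c ∧
    G.Adj v a ∧ G.Adj v b ∧ G.Adj v c ∧ ¬ G.Adj a b ∧ ¬ G.Adj a c ∧ ¬ G.Adj b c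

/-- The child-edge graph `G(L,v)`: vertices are the children of `v` (equivalently
the child edges of `v`), two of them adjacent if a cord of `L` joins their subtrees. -/
def childGraph {X V : Type} (T : XTree X V) (L : Set (Set X)) (v : V) :
    SimpleGraph {c : V // c ∈ T.children v} where
  Adj c₁ c₂ := c₁ ≠ c₂ ∧ ∃ a b : X,
    a ∈ T.leafSet (c₁ : V) ∧ b ∈ T.leafSet (c₂ : V) ∧ ({a, b} : Set X) ∈ L
  symm := by
    constructor
    rintro c₁ c₂ ⟨h, a, b, ha, hb, hm⟩
    exact ⟨Ne.symm h, b, a, hb, ha, by rw [Set.pair_comm]; exact hm⟩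
  loopless := by constructor; rintro c ⟨h, -⟩; exact h rfl

/-- `cl(T)`: the clusters of non-root interior vertices. -/
def clSet {X V : Type} (T : XTree X V) : Set (Set X) :=
  {A | ∃ v : V, v ≠ T.root ∧ T.Interior v ∧ A = T.leafSet v}

/-- A cluster marker map for `T` and the ordering of `X`:
`f A` is the `σ`-least element of `A` not used as marker of a proper subcluster. -/
def IsClusterMarker {X V : Type} [LinearOrder X] (T : XTree X V) (f : Set X → X) : Prop :=
  ∀ A ∈ clSet T,
    ((∃ B ∈ clSet T, B ⊂ A) →
      IsLeast (A \ {y | ∃ B ∈ clSet T, B ⊂ A ∧ f B = y}) (f A)) ∧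
    ((¬ ∃ B ∈ clSet T, B ⊂ A) → IsLeast A (f A))

/-- The marker of a child `c` of an interior vertex: the label of `c` if `c` is a leaf,
and `f (L(c))` if `c` is interior. -/
def markRel {X V : Type} (T : XTree X V) (f : Set X → X) (c : V) (a : X) : Prop :=
  T.leaf a = c ∨ (T.Interior c ∧ a = f (T.leafSet c))

/-- `L_{(T,f)}(v)`: all cords between markers of distinct children of `v`. -/
def lassoAt {X V : Type} (T : XTree X V) (f : Set X → X) (v : V) : Set (Set X) :=
  {c | ∃ c₁ c₂ : V, c₁ ∈ T.children v ∧ c₂ ∈ T.children v ∧ c₁ ≠ c₂ ∧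
    ∃ a b : X, markRel T f c₁ a ∧ markRel T f c₂ b ∧ c = {a, b}}

/-- `L_{(T,f)}`: the union over all interior vertices of `L_{(T,f)}(v)`. -/
def lassoFull {X V : Type} (T : XTree X V) (f : Set X → X) : Set (Set X) :=
  {c | ∃ v : V, T.Interior v ∧ c ∈ lassoAt T f v}

/-- An equidistant proper edge-weighting of `T`, encoded by the height function
`t v` = distance from `v` to any leaf below it (so all leaves are equidistant
from the root); properness: interior edges have positive weight. -/
def EquidistantProper {X V : Type} (T : XTree X V) (t : V → ℝ) : Prop :=
  (∀ x : X, t (T.leaf x) = 0) ∧ (∀ v : V, t v ≤ t (T.parent v)) ∧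
    ∀ v : V, v ≠ T.root → T.Interior v → t v < t (T.parent v)

/-- Equivalence of two `X`-trees: a root-, parent- and labelling-preserving bijection. -/
def TreeEquiv {X V V' : Type} (T : XTree X V) (T' : XTree X V') : Prop :=
  ∃ φ : V ≃ V', φ T.root = T'.root ∧ (∀ v, φ (T.parent v) = T'.parent (φ v)) ∧
    ∀ x, φ (T.leaf x) = T'.leaf x

/-- `S` is (equivalent to) the restriction `T|_Y`: the clusters of `S` are exactly the
nonempty traces on `Y` of the clusters of `T`. -/
def IsRestriction {X : Type} (Y : Set X) {V W : Type}
    (T : XTree X V) (S : XTree (↥Y) W) : Prop :=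
  ∀ A : Set X, A ⊆ Y →
    ((∃ w : W, A = Subtype.val '' S.leafSet w) ↔ (A.Nonempty ∧ ∃ v : V, A = T.leafSet v ∩ Y))

/-- The restriction `L|_Y` of a set of cords of `X` to cords of `Y`. -/
def restrictLasso {X : Type} (Y : Set X) (L : Set (Set X)) : Set (Set ↥Y) :=
  {c | ∃ a b : ↥Y, a ≠ b ∧ c = {a, b} ∧ ({(a : X), (b : X)} : Set X) ∈ L}

section TreeBasics

namespace XTree

variable {X V : Type} (T : XTree X V)

lemma parent_iterate_root (n : ℕ) : T.parent^[n] T.root = T.root := by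
  induction n with
  | zero => rfl
  | succ n ih => rw [Function.iterate_succ_apply', ih, T.parent_root]

lemma eq_root_of_iterate_fixed {v : V} {k : ℕ} (hk : 1 ≤ k)
    (h : T.parent^[k] v = v) : v = T.root := by
  obtain ⟨n, hn⟩ := T.reaches v
  have hcycle : ∀ m, T.parent^[k * m] v = v := by
    intro m
    induction m with
    | zero => rfl
    | succ m ih =>
      rw [Nat.mul_succ, Function.iterate_add_apply, h, ih]
  have hle : n ≤ k * n := Nat.le_mul_of_pos_left n hk
  have : T.parent^[k * n] v = T.root := by
    rw [show k * n = (k * n - n) + n from (Nat.sub_add_cancel hle).symm,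
      Function.iterate_add_apply, hn, parent_iterate_root]
  rw [hcycle n] at this
  exact this

lemma desc_refl (v : V) : T.Desc v v := ⟨0, rfl⟩

lemma desc_trans {u v w : V} (h1 : T.Desc u v) (h2 : T.Desc v w) : T.Desc u w := by
  obtain ⟨n, hn⟩ := h1; obtain ⟨m, hm⟩ := h2
  exact ⟨n + m, by rw [Function.iterate_add_apply, hm, hn]⟩

lemma desc_root (v : V) : T.Desc T.root v := T.reaches v

lemma desc_antisymm {v w : V} (h1 : T.Desc v w) (h2 : T.Desc w v) : v = w := by
  obtain ⟨n, hn⟩ := h1; obtain ⟨m, hm⟩ := h2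
  have h : T.parent^[n + m] v = v := by rw [Function.iterate_add_apply, hm, hn]
  rcases Nat.eq_zero_or_pos (n + m) with h0 | h0
  · have hn0 : n = 0 := by omega
    have hm0 : m = 0 := by omega
    rw [hm0] at hm; exact hm
  · have hvroot : v = T.root := T.eq_root_of_iterate_fixed h0 h
    rw [hvroot] at hm ⊢
    rw [parent_iterate_root] at hm
    exact hm

lemma desc_total {u w x : V} (h1 : T.Desc u x) (h2 : T.Desc w x) :
    T.Desc u w ∨ T.Desc w u := by
  obtain ⟨n, hn⟩ := h1; obtain ⟨m, hm⟩ := h2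
  rcases le_total n m with h | h
  · right
    refine ⟨m - n, ?_⟩
    rw [← hn, ← Function.iterate_add_apply, Nat.sub_add_cancel h, hm]
  · left
    refine ⟨n - m, ?_⟩
    rw [← hm, ← Function.iterate_add_apply, Nat.sub_add_cancel h, hn]

lemma child_ne_root {c v : V} (h : c ∈ T.children v) : c ≠ T.root := by
  intro hc
  apply h.2
  have := h.1
  rw [hc, T.parent_root] at this
  rw [hc, this]

lemma interior_of_child {c v : V} (h : c ∈ T.children v) : T.Interior v := by
  intro hleaf
  exact h.2 ((T.leaf_iff v).2 hleaf c h.1)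

lemma children_nonempty {v : V} (hv : T.Interior v) : ∃ c, c ∈ T.children v := by
  unfold Interior IsLeaf at hv
  rw [← T.leaf_iff] at hv
  push_neg at hv
  obtain ⟨w, hw1, hw2⟩ := hv
  exact ⟨w, hw1, hw2⟩

lemma desc_of_child {c v : V} (h : c ∈ T.children v) : T.Desc v c :=
  ⟨1, by simpa using h.1⟩

lemma no_desc_of_leaf {x : X} {w : V} (h : T.Desc (T.leaf x) w) : w = T.leaf x := by
  obtain ⟨n, hn⟩ := h
  induction n generalizing w with
  | zero => exact hn
  | succ n ih =>
    rw [Function.iterate_succ_apply] at hn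
    have hpw : T.parent w = T.leaf x := ih hn
    exact (T.leaf_iff (T.leaf x)).2 ⟨x, rfl⟩ w hpw

lemma leafSet_leaf (x : X) : T.leafSet (T.leaf x) = {x} := by
  ext y
  constructor
  · intro hy
    have := T.no_desc_of_leaf hy
    exact (T.leaf_inj this).symm ▸ rfl
  · rintro rfl
    exact T.desc_refl _

end XTree

end TreeBasics
section TreeBasics2

namespace XTree

variable {X V : Type} (T : XTree X V)

lemma exists_child_desc {v w : V} (h : T.Desc v w) (hne : w ≠ v) :
    ∃ c ∈ T.children v, T.Desc c w := by
  obtain ⟨n, hn⟩ := h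
  induction n with
  | zero => exact absurd hn hne
  | succ n ih =>
    by_cases hc : T.parent^[n] w = v
    · exact ih hc
    · refine ⟨T.parent^[n] w, ⟨?_, hc⟩, ⟨n, rfl⟩⟩
      have := hn
      rw [Function.iterate_succ_apply'] at this
      exact this

lemma child_eq_of_desc {c₁ c₂ v : V} (h1 : c₁ ∈ T.children v) (h2 : c₂ ∈ T.children v)
    (h : T.Desc c₁ c₂) : c₁ = c₂ := by
  obtain ⟨k, hk⟩ := h
  rcases Nat.eq_zero_or_pos k with h0 | h0
  · rw [h0] at hk; exact hk.symm
  · exfalso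
    have hc2v : T.parent^[k - 1] v = c₁ := by
      rw [← h2.1, ← Function.iterate_succ_apply, show (k - 1).succ = k from by omega, hk]
    have hvv : T.parent^[k] v = v := by
      rw [show k = 1 + (k - 1) from by omega, Function.iterate_add_apply, hc2v]
      simpa using h1.1
    have hvroot : v = T.root := T.eq_root_of_iterate_fixed h0 hvv
    have : c₁ = T.root := by
      rw [← hc2v, hvroot, parent_iterate_root]
    exact T.child_ne_root h1 this

lemma children_eq_of_common_desc {c₁ c₂ v w : V} (h1 : c₁ ∈ T.children v)
    (h2 : c₂ ∈ T.children v) (hd1 : T.Desc c₁ w) (hd2 : T.Desc c₂ w) : c₁ = c₂ := by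
  rcases T.desc_total hd1 hd2 with h | h
  · exact T.child_eq_of_desc h1 h2 h
  · exact (T.child_eq_of_desc h2 h1 h).symm

lemma children_eq_of_leafSet_inter {c₁ c₂ v : V} (h1 : c₁ ∈ T.children v)
    (h2 : c₂ ∈ T.children v) {x : X} (hx1 : x ∈ T.leafSet c₁) (hx2 : x ∈ T.leafSet c₂) :
    c₁ = c₂ :=
  T.children_eq_of_common_desc h1 h2 hx1 hx2

lemma leafSet_subset_of_desc {v w : V} (h : T.Desc v w) :
    T.leafSet w ⊆ T.leafSet v := fun _ hx => T.desc_trans h hx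

lemma ncard_desc_lt [Fintype V] {c v : V} (hc : c ∈ T.children v) :
    {u | T.Desc c u}.ncard < {u | T.Desc v u}.ncard := by
  apply Set.ncard_lt_ncard
  · constructor
    · exact fun u hu => T.desc_trans (T.desc_of_child hc) hu
    · intro hsub
      have hv : v ∈ {u | T.Desc c u} := hsub (T.desc_refl v)
      exact hc.2 (T.desc_antisymm (T.desc_of_child hc) hv).symm
  · exact Set.toFinite _

lemma leafSet_nonempty [Fintype V] : ∀ v : V, (T.leafSet v).Nonempty := by
  have key : ∀ (n : ℕ) (v : V), {u | T.Desc v u}.ncard ≤ n → (T.leafSet v).Nonempty := by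
    intro n
    induction n with
    | zero =>
      intro v hv
      exfalso
      have : v ∈ {u | T.Desc v u} := T.desc_refl v
      have h0 : {u | T.Desc v u}.ncard = 0 := Nat.le_zero.1 hv
      rw [Set.ncard_eq_zero (Set.toFinite _)] at h0
      rw [h0] at this
      exact this
    | succ n ih =>
      intro v hv
      by_cases hleaf : T.IsLeaf v
      · obtain ⟨x, hx⟩ := hleaf
        exact ⟨x, by rw [← hx]; exact T.desc_refl _⟩
      · obtain ⟨c, hc⟩ := T.children_nonempty hleaf
        obtain ⟨x, hx⟩ := ih c (by have := T.ncard_desc_lt hc; omega)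
        exact ⟨x, T.desc_trans (T.desc_of_child hc) hx⟩
  exact fun v => key _ v le_rfl

lemma two_children [Fintype V] (hph : T.IsPhylo) {v : V} (hv : T.Interior v) :
    2 ≤ (T.children v).ncard := by
  by_cases hroot : v = T.root
  · rw [hroot]; exact hph.1
  · exact hph.2 v hroot hv

lemma exists_other_child [Fintype V] (hph : T.IsPhylo) {v c : V} (hv : T.Interior v)
    (hc : c ∈ T.children v) : ∃ c' ∈ T.children v, c' ≠ c := by
  have h2 := T.two_children hph hv
  have h1 : 1 < (T.children v).ncard := h2
  rw [Set.one_lt_ncard_iff (Set.toFinite _)] at h1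
  obtain ⟨a, b, ha, hb, hab⟩ := h1
  by_cases hac : a = c
  · exact ⟨b, hb, by rw [← hac]; exact hab.symm⟩
  · exact ⟨a, ha, hac⟩

lemma leafSet_inj_aux [Fintype V] (hph : T.IsPhylo) {v w : V} (hv : T.Interior v)
    (hd : T.Desc v w) (hne : w ≠ v) (h : T.leafSet v = T.leafSet w) : False := by
  obtain ⟨c, hc, hcd⟩ := T.exists_child_desc hd hne
  obtain ⟨c', hc', hcc⟩ := T.exists_other_child hph hv hc
  obtain ⟨y, hy⟩ := T.leafSet_nonempty c'
  have hyv : y ∈ T.leafSet v := T.leafSet_subset_of_desc (T.desc_of_child hc') hy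
  have hyw : y ∈ T.leafSet w := h ▸ hyv
  have hyc : y ∈ T.leafSet c := T.leafSet_subset_of_desc hcd hyw
  exact hcc (T.children_eq_of_leafSet_inter hc' hc hy hyc)

lemma leafSet_inj [Fintype V] (hph : T.IsPhylo) {v w : V} (hv : T.Interior v)
    (hw : T.Interior w) (h : T.leafSet v = T.leafSet w) : v = w := by
  by_contra hne
  obtain ⟨x, hx⟩ := T.leafSet_nonempty v
  have hx' : x ∈ T.leafSet w := h ▸ hx
  rcases T.desc_total hx hx' with hd | hd
  · exact T.leafSet_inj_aux hph hv hd (Ne.symm hne) h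
  · exact T.leafSet_inj_aux hph hw hd hne h.symm

lemma root_interior [Fintype V] (hph : T.IsPhylo) : T.Interior T.root := by
  have h2 := hph.1
  have : (T.children T.root).Nonempty := by
    apply Set.nonempty_of_ncard_ne_zero; omega
  obtain ⟨c, hc⟩ := this
  exact T.interior_of_child hc

lemma leaf_ne_root [Fintype V] (hph : T.IsPhylo) (x : X) : T.leaf x ≠ T.root := by
  intro h
  exact T.root_interior hph ⟨x, h⟩

lemma leaf_mem_children_parent [Fintype V] (hph : T.IsPhylo) (x : X) :
    T.leaf x ∈ T.children (T.parent (T.leaf x)) := by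
  refine ⟨rfl, ?_⟩
  intro h
  have : T.parent^[1] (T.leaf x) = T.leaf x := by simpa using h.symm
  exact T.leaf_ne_root hph x (T.eq_root_of_iterate_fixed le_rfl this)

lemma x_mem_leafSet_of_child {v c : V} (hc : c ∈ T.children v) {x : X}
    (hx : x ∈ T.leafSet c) : x ∈ T.leafSet v :=
  T.leafSet_subset_of_desc (T.desc_of_child hc) hx

lemma interior_parent {v : V} (hv : v ≠ T.root) : T.Interior (T.parent v) := by
  apply T.interior_of_child (c := v)
  refine ⟨rfl, ?_⟩
  intro h
  exact hv (T.eq_root_of_iterate_fixed le_rfl (by simpa using h.symm))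

lemma mem_children_parent {v : V} (hv : v ≠ T.root) : v ∈ T.children (T.parent v) := by
  refine ⟨rfl, fun h => hv (T.eq_root_of_iterate_fixed le_rfl (by simpa using h.symm))⟩

end XTree

end TreeBasics2
section Markers

open XTree

variable {X V : Type} [Fintype X] [Fintype V] [LinearOrder X]

/-- The marker set of an interior vertex: markers of its children. -/
def Mset (T : XTree X V) (f : Set X → X) (v : V) : Set X :=
  {a | ∃ c ∈ T.children v, markRel T f c a}

variable {T : XTree X V} {f : Set X → X}

lemma mem_clSet_of_child {c v : V} (hc : c ∈ T.children v) (hint : T.Interior c) :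
    T.leafSet c ∈ clSet T :=
  ⟨c, T.child_ne_root hc, hint, rfl⟩

lemma f_mem (hf : IsClusterMarker T f) {A : Set X} (hA : A ∈ clSet T) : f A ∈ A := by
  by_cases h : ∃ B ∈ clSet T, B ⊂ A
  · exact ((hf A hA).1 h).1.1
  · exact ((hf A hA).2 h).1

lemma f_not_marker (hf : IsClusterMarker T f) {A B : Set X} (hA : A ∈ clSet T)
    (hB : B ∈ clSet T) (hBA : B ⊂ A) : f A ≠ f B := by
  have h := ((hf A hA).1 ⟨B, hB, hBA⟩).1.2
  intro heq
  exact h ⟨B, hB, hBA, heq.symm⟩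

lemma f_injOn (hph : T.IsPhylo) (hf : IsClusterMarker T f) {A B : Set X}
    (hA : A ∈ clSet T) (hB : B ∈ clSet T) (hfeq : f A = f B) : A = B := by
  by_contra hne
  obtain ⟨vA, hvA, hintA, rfl⟩ := hA
  obtain ⟨vB, hvB, hintB, rfl⟩ := hB
  have hx : f (T.leafSet vA) ∈ T.leafSet vA := f_mem hf ⟨vA, hvA, hintA, rfl⟩
  have hx' : f (T.leafSet vA) ∈ T.leafSet vB := by
    rw [hfeq] at hx ⊢
    exact f_mem hf ⟨vB, hvB, hintB, rfl⟩
  rcases T.desc_total hx hx' with hd | hd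
  · have hsub : T.leafSet vB ⊆ T.leafSet vA := T.leafSet_subset_of_desc hd
    exact f_not_marker hf ⟨vA, hvA, hintA, rfl⟩ ⟨vB, hvB, hintB, rfl⟩
      ⟨hsub, fun h => hne (Set.Subset.antisymm h hsub)⟩ hfeq
  · have hsub : T.leafSet vA ⊆ T.leafSet vB := T.leafSet_subset_of_desc hd
    exact f_not_marker hf ⟨vB, hvB, hintB, rfl⟩ ⟨vA, hvA, hintA, rfl⟩
      ⟨hsub, fun h => hne (Set.Subset.antisymm hsub h)⟩ hfeq.symm

lemma markRel_unique {c : V} {a b : X} (ha : markRel T f c a) (hb : markRel T f c b) :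
    a = b := by
  rcases ha with ha | ⟨hint, ha⟩
  · rcases hb with hb | ⟨hint, hb⟩
    · exact T.leaf_inj (ha.trans hb.symm)
    · exact absurd ⟨a, ha⟩ hint
  · rcases hb with hb | ⟨hint', hb⟩
    · exact absurd ⟨b, hb⟩ hint
    · exact ha.trans hb.symm

lemma markRel_mem_leafSet (hf : IsClusterMarker T f) {v c : V} (hc : c ∈ T.children v)
    {a : X} (ha : markRel T f c a) : a ∈ T.leafSet c := by
  rcases ha with ha | ⟨hint, rfl⟩
  · rw [← ha, T.leafSet_leaf]; rfl
  · exact f_mem hf (mem_clSet_of_child hc hint)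

lemma markRel_exists (T : XTree X V) (f : Set X → X) (c : V) : ∃ a, markRel T f c a := by
  by_cases h : T.IsLeaf c
  · obtain ⟨x, hx⟩ := h
    exact ⟨x, Or.inl hx⟩
  · exact ⟨f (T.leafSet c), Or.inr ⟨h, rfl⟩⟩

lemma interior_cluster_unique (hph : T.IsPhylo) (hf : IsClusterMarker T f)
    {c c' : V} (hc : c ≠ T.root) (hc' : c' ≠ T.root) (hic : T.Interior c)
    (hic' : T.Interior c') (h : f (T.leafSet c) = f (T.leafSet c')) : c = c' := by
  have := f_injOn hph hf ⟨c, hc, hic, rfl⟩ ⟨c', hc', hic', rfl⟩ h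
  exact T.leafSet_inj hph hic hic' this

lemma Mset_cases (hf : IsClusterMarker T f) {v : V} {a : X} (ha : a ∈ Mset T f v) :
    v = T.parent (T.leaf a) ∨
      ∃ c, c ∈ T.children v ∧ T.Interior c ∧ f (T.leafSet c) = a ∧
        T.Desc c (T.leaf a) := by
  obtain ⟨c, hc, hrel⟩ := ha
  rcases hrel with hrel | ⟨hint, rfl⟩
  · left; rw [hrel, hc.1]
  · right
    refine ⟨c, hc, hint, rfl, ?_⟩
    exact f_mem hf (mem_clSet_of_child hc hint)

lemma Mset_mem_of_leaf_child (hph : T.IsPhylo) (a : X) :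
    a ∈ Mset T f (T.parent (T.leaf a)) :=
  ⟨T.leaf a, T.leaf_mem_children_parent hph a, Or.inl rfl⟩

/-- `a` belongs to at most two marker sets. -/
lemma Mset_at_most_two (hph : T.IsPhylo) (hf : IsClusterMarker T f) {a : X}
    {v₁ v₂ v₃ : V} (h12 : v₁ ≠ v₂) (h13 : v₁ ≠ v₃) (h23 : v₂ ≠ v₃)
    (h1 : a ∈ Mset T f v₁) (h2 : a ∈ Mset T f v₂) (h3 : a ∈ Mset T f v₃) : False := by
  have key : ∀ {v w : V}, v ≠ w → a ∈ Mset T f v → a ∈ Mset T f w →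
      (v = T.parent (T.leaf a) ∧ ∃ c, c ∈ T.children w ∧ T.Interior c ∧
        f (T.leafSet c) = a) ∨
      (w = T.parent (T.leaf a) ∧ ∃ c, c ∈ T.children v ∧ T.Interior c ∧
        f (T.leafSet c) = a) := by
    intro v w hvw hv hw
    rcases Mset_cases hf hv with hv' | ⟨c, hc, hic, hfc, _⟩
    · rcases Mset_cases hf hw with hw' | ⟨c', hc', hic', hfc', _⟩
      · exact absurd (hv'.trans hw'.symm) hvw
      · exact Or.inl ⟨hv', c', hc', hic', hfc'⟩
    · rcases Mset_cases hf hw with hw' | ⟨c', hc', hic', hfc', _⟩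
      · exact Or.inr ⟨hw', c, hc, hic, hfc⟩
      · exfalso
        have : c = c' := interior_cluster_unique hph hf (T.child_ne_root hc)
          (T.child_ne_root hc') hic hic' (hfc.trans hfc'.symm)
        apply hvw
        rw [← hc.1, ← hc'.1, this]
  -- pigeonhole among three
  rcases key h12 h1 h2 with ⟨ha1, c2, hc2, hic2, hfc2⟩ | ⟨ha2, c1, hc1, hic1, hfc1⟩
  · rcases key h13 h1 h3 with ⟨_, c3, hc3, hic3, hfc3⟩ | ⟨ha3, c1, hc1, hic1, hfc1⟩
    · -- interior witnesses at v₂ and v₃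
      have hcc : c2 = c3 := interior_cluster_unique hph hf (T.child_ne_root hc2)
        (T.child_ne_root hc3) hic2 hic3 (hfc2.trans hfc3.symm)
      exact h23 (by rw [← hc2.1, ← hc3.1, hcc])
    · -- v₁ = parent leaf a = v₃
      exact h13 (ha1.trans ha3.symm)
  · rcases key h23 h2 h3 with ⟨ha2', c3, hc3, hic3, hfc3⟩ | ⟨ha3, c2, hc2, hic2, hfc2⟩
    · -- interior at v₁ (c1) and v₃ (c3)
      have hcc : c1 = c3 := interior_cluster_unique hph hf (T.child_ne_root hc1)
        (T.child_ne_root hc3) hic1 hic3 (hfc1.trans hfc3.symm)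
      exact h13 (by rw [← hc1.1, ← hc3.1, hcc])
    · exact h23 (ha2.trans ha3.symm)

end Markers
section Shared

open XTree

variable {X V : Type} [Fintype X] [Fintype V] [LinearOrder X] {T : XTree X V} {f : Set X → X}

lemma no_parent_cycle {p q : V} (hpq : p ≠ q) {m n : ℕ} (hm : T.parent^[m] p = q)
    (hn : T.parent^[n] q = p) : False := by
  have hcyc : T.parent^[n + m] p = p := by
    rw [Function.iterate_add_apply, hm, hn]
  rcases Nat.eq_zero_or_pos (n + m) with h0 | h0
  · have hm0 : m = 0 := by omega
    rw [hm0] at hm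
    exact hpq hm
  · have hproot : p = T.root := T.eq_root_of_iterate_fixed h0 hcyc
    rw [hproot, T.parent_iterate_root] at hm
    exact hpq (hproot.trans hm)

lemma mem_two_Msets (hf : IsClusterMarker T f) {a : X} {v w : V}
    (hvw : v ≠ w) (hv : a ∈ Mset T f v) (hw : a ∈ Mset T f w)
    (hph : T.IsPhylo) :
    ∃ p q c : V, p = T.parent (T.leaf a) ∧ (∃ j, T.parent^[j] p = c) ∧
      c ∈ T.children q ∧ T.Interior c ∧ f (T.leafSet c) = a ∧
      ((v = p ∧ w = q) ∨ (v = q ∧ w = p)) := by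
  have key : ∀ {c u : V}, c ∈ T.children u → T.Interior c → T.Desc c (T.leaf a) →
      ∃ j, T.parent^[j] (T.parent (T.leaf a)) = c := by
    intro c u hc hic ⟨k, hk⟩
    rcases Nat.eq_zero_or_pos k with h0 | h0
    · rw [h0, Function.iterate_zero_apply] at hk
      exact absurd ⟨a, hk⟩ hic
    · refine ⟨k - 1, ?_⟩
      rw [← Function.iterate_succ_apply, show (k - 1).succ = k from by omega, hk]
  rcases Mset_cases hf hv with hv' | ⟨c, hc, hic, hfc, hdc⟩
  · rcases Mset_cases hf hw with hw' | ⟨c', hc', hic', hfc', hdc'⟩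
    · exact absurd (hv'.trans hw'.symm) hvw
    · exact ⟨v, w, c', hv', by rw [hv']; exact key hc' hic' hdc',
        hc', hic', hfc', Or.inl ⟨rfl, rfl⟩⟩
  · rcases Mset_cases hf hw with hw' | ⟨c', hc', hic', hfc', hdc'⟩
    · exact ⟨w, v, c, hw', by rw [hw']; exact key hc hic hdc,
        hc, hic, hfc, Or.inr ⟨rfl, rfl⟩⟩
    · exfalso
      have : c = c' := interior_cluster_unique hph hf (T.child_ne_root hc)
        (T.child_ne_root hc') hic hic' (hfc.trans hfc'.symm)
      exact hvw (by rw [← hc.1, ← hc'.1, this])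

lemma shared_caseA_aux {p q ca cb : V} {ja jb : ℕ} (hle : ja ≤ jb)
    (hja : T.parent^[ja] p = ca) (hjb : T.parent^[jb] p = cb)
    (hca : ca ∈ T.children q) (hcb : cb ∈ T.children q) (hne : ca ≠ cb) : False := by
  have hd : T.parent^[jb - ja] ca = cb := by
    rw [← hja, ← Function.iterate_add_apply, Nat.sub_add_cancel hle, hjb]
  have hpos : 1 ≤ jb - ja := by
    rcases Nat.eq_zero_or_pos (jb - ja) with h0 | h0
    · rw [h0] at hd; exact absurd hd hne
    · exact h0
  have hdq : T.parent^[jb - ja - 1] q = cb := by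
    rw [← hca.1, ← Function.iterate_succ_apply,
      show (jb - ja - 1).succ = jb - ja from by omega, hd]
  have hq : T.parent^[jb - ja] q = q := by
    rw [show jb - ja = (jb - ja - 1) + 1 from by omega, Function.iterate_succ_apply',
      hdq, hcb.1]
  have hqroot : q = T.root := T.eq_root_of_iterate_fixed hpos hq
  rw [hqroot, T.parent_iterate_root] at hdq
  exact T.child_ne_root hcb hdq.symm

lemma shared_caseA {p q ca cb : V} {ja jb : ℕ}
    (hja : T.parent^[ja] p = ca) (hjb : T.parent^[jb] p = cb)
    (hca : ca ∈ T.children q) (hcb : cb ∈ T.children q) (hne : ca ≠ cb) : False := by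
  rcases le_total ja jb with h | h
  · exact shared_caseA_aux h hja hjb hca hcb hne
  · exact shared_caseA_aux h hjb hja hcb hca hne.symm

lemma Mset_shared_unique (hph : T.IsPhylo) (hf : IsClusterMarker T f) {v w : V}
    (hvw : v ≠ w) {a b : X} (hav : a ∈ Mset T f v) (haw : a ∈ Mset T f w)
    (hbv : b ∈ Mset T f v) (hbw : b ∈ Mset T f w) : a = b := by
  by_contra hab
  obtain ⟨pa, qa, ca, hpa, ⟨ja, hja⟩, hcaq, hica, hfca, hora⟩ :=
    mem_two_Msets hf hvw hav haw hph
  obtain ⟨pb, qb, cb, hpb, ⟨jb, hjb⟩, hcbq, hicb, hfcb, horb⟩ :=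
    mem_two_Msets hf hvw hbv hbw hph
  have hcacb : ca ≠ cb := by
    intro h
    rw [h, hfcb] at hfca
    exact hab hfca.symm
  rcases hora with ⟨hv1, hw1⟩ | ⟨hv1, hw1⟩ <;> rcases horb with ⟨hv2, hw2⟩ | ⟨hv2, hw2⟩
  · exact shared_caseA (p := v) (q := w)
      (by rw [hv1]; exact hja) (by rw [hv2]; exact hjb)
      (by rw [hw1]; exact hcaq) (by rw [hw2]; exact hcbq) hcacb
  · -- v = pa, w = qa, v = qb, w = pb : cycle
    refine no_parent_cycle (T := T) hvw (m := ja + 1) (n := jb + 1) ?_ ?_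
    · rw [Function.iterate_succ_apply', hv1, hja, hcaq.1, hw1]
    · rw [Function.iterate_succ_apply', hw2, hjb, hcbq.1, hv2]
  · refine no_parent_cycle (T := T) hvw (m := jb + 1) (n := ja + 1) ?_ ?_
    · rw [Function.iterate_succ_apply', hv2, hjb, hcbq.1, hw2]
    · rw [Function.iterate_succ_apply', hw1, hja, hcaq.1, hv1]
  · exact shared_caseA (p := w) (q := v)
      (by rw [hw1]; exact hja) (by rw [hw2]; exact hjb)
      (by rw [hv1]; exact hcaq) (by rw [hv2]; exact hcbq) hcacb

end Shared
section Gamma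

open XTree

variable {X V : Type} [Fintype X] [Fintype V] [LinearOrder X] {T : XTree X V} {f : Set X → X}

lemma markers_ne (hf : IsClusterMarker T f) {v c₁ c₂ : V} (hc₁ : c₁ ∈ T.children v)
    (hc₂ : c₂ ∈ T.children v) (hne : c₁ ≠ c₂) {a b : X} (ha : markRel T f c₁ a)
    (hb : markRel T f c₂ b) : a ≠ b := by
  intro hab
  apply hne
  exact T.children_eq_of_leafSet_inter hc₁ hc₂ (markRel_mem_leafSet hf hc₁ ha)
    (hab ▸ markRel_mem_leafSet hf hc₂ hb)

lemma Mset_clique_adj {v : V} (hv : T.Interior v) {a b : X}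
    (ha : a ∈ Mset T f v) (hb : b ∈ Mset T f v) (hab : a ≠ b) :
    (cordGraph (lassoFull T f)).Adj a b := by
  obtain ⟨ca, hca, hra⟩ := ha
  obtain ⟨cb, hcb, hrb⟩ := hb
  have hcc : ca ≠ cb := fun h => hab (markRel_unique hra (h ▸ hrb))
  exact ⟨hab, ⟨v, hv, ca, cb, hca, hcb, hcc, a, b, hra, hrb, rfl⟩⟩

lemma cord_mem_Mset {v : V} {e : Set X} (he : e ∈ lassoAt T f v) {x : X} (hx : x ∈ e) :
    x ∈ Mset T f v := by
  obtain ⟨c₁, c₂, hc₁, hc₂, hcc, a, b, hra, hrb, rfl⟩ := he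
  rcases hx with rfl | rfl
  · exact ⟨c₁, hc₁, hra⟩
  · exact ⟨c₂, hc₂, hrb⟩

lemma adj_mem_Mset {a b : X} (h : (cordGraph (lassoFull T f)).Adj a b) :
    ∃ v, T.Interior v ∧ a ∈ Mset T f v ∧ b ∈ Mset T f v := by
  obtain ⟨hab, v, hv, he⟩ := h
  exact ⟨v, hv, cord_mem_Mset he (by left; rfl), cord_mem_Mset he (by right; rfl)⟩

lemma Mset_nonempty (hph : T.IsPhylo) (hf : IsClusterMarker T f) {v : V}
    (hv : T.Interior v) : ∃ a b : X, a ∈ Mset T f v ∧ b ∈ Mset T f v ∧ a ≠ b := by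
  have h1 : 1 < (T.children v).ncard := T.two_children hph hv
  rw [Set.one_lt_ncard_iff (Set.toFinite _)] at h1
  obtain ⟨c₁, c₂, hc₁, hc₂, hcc⟩ := h1
  obtain ⟨a, ha⟩ := markRel_exists T f c₁
  obtain ⟨b, hb⟩ := markRel_exists T f c₂
  exact ⟨a, b, ⟨c₁, hc₁, ha⟩, ⟨c₂, hc₂, hb⟩, markers_ne hf hc₁ hc₂ hcc ha hb⟩

lemma reachable_key (hph : T.IsPhylo) (hf : IsClusterMarker T f) :
    ∀ (n : ℕ) (v : V), {u | T.Desc v u}.ncard ≤ n → T.Interior v →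
      ∀ x y : X, x ∈ T.leafSet v → y ∈ T.leafSet v →
        (cordGraph (lassoFull T f)).Reachable x y := by
  intro n
  induction n with
  | zero =>
    intro v hv _ x y _ _
    exfalso
    have : v ∈ {u | T.Desc v u} := T.desc_refl v
    have h0 : {u | T.Desc v u}.ncard = 0 := Nat.le_zero.1 hv
    rw [Set.ncard_eq_zero (Set.toFinite _)] at h0
    rw [h0] at this
    exact this
  | succ n ih =>
    intro v hvn hv x y hx hy
    -- to-marker step
    have step : ∀ z : X, z ∈ T.leafSet v →
        ∃ (c : V) (m : X), c ∈ T.children v ∧ markRel T f c m ∧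
          (cordGraph (lassoFull T f)).Reachable z m := by
      intro z hz
      have hzv : T.leaf z ≠ v := fun h => hv ⟨z, h⟩
      obtain ⟨c, hc, hdc⟩ := T.exists_child_desc hz hzv
      by_cases hleaf : T.IsLeaf c
      · obtain ⟨x', hx'⟩ := hleaf
        have : z = x' := by
          have := T.no_desc_of_leaf (hx' ▸ hdc)
          exact T.leaf_inj (by rw [this, hx'])
        refine ⟨c, z, hc, Or.inl (by rw [this, hx']), SimpleGraph.Reachable.refl z⟩
      · obtain ⟨m, hm⟩ := markRel_exists T f c
        have hmem : m ∈ T.leafSet c := markRel_mem_leafSet hf hc hm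
        have hcard : {u | T.Desc c u}.ncard ≤ n := by
          have := T.ncard_desc_lt hc; omega
        exact ⟨c, m, hc, hm, ih c hcard hleaf z m hdc hmem⟩
    obtain ⟨cx, mx, hcx, hmx, hrx⟩ := step x hx
    obtain ⟨cy, my, hcy, hmy, hry⟩ := step y hy
    by_cases hcc : cx = cy
    · -- both under the same child
      subst hcc
      have hmm : mx = my := markRel_unique hmx hmy
      exact hrx.trans (hmm ▸ hry.symm)
    · have hne : mx ≠ my := markers_ne hf hcx hcy hcc hmx hmy
      have hadj : (cordGraph (lassoFull T f)).Adj mx my :=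
        Mset_clique_adj hv ⟨cx, hcx, hmx⟩ ⟨cy, hcy, hmy⟩ hne
      exact (hrx.trans hadj.reachable).trans hry.symm

lemma gamma_preconnected (hph : T.IsPhylo) (hf : IsClusterMarker T f) :
    (cordGraph (lassoFull T f)).Preconnected := by
  intro x y
  have hroot := T.root_interior hph
  exact reachable_key hph hf _ T.root le_rfl hroot x y (T.desc_root _) (T.desc_root _)

lemma gamma_connected (hph : T.IsPhylo) (hf : IsClusterMarker T f) (hX : Nonempty X) :
    (cordGraph (lassoFull T f)).Connected :=
  ⟨gamma_preconnected hph hf⟩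

end Gamma
section GraphCounting

lemma exists_dist_step {α : Type} (G : SimpleGraph α) (hG : G.Connected) (r : α)
    {v : α} (hv : v ≠ r) : ∃ u : α, G.Adj v u ∧ G.dist u r + 1 = G.dist v r := by
  obtain ⟨p, hp⟩ := hG.exists_walk_length_eq_dist v r
  have hpos : 0 < G.dist v r := hG.pos_dist_of_ne hv
  cases p with
  | nil => exact absurd rfl hv
  | @cons _ u _ h q =>
    refine ⟨u, h, ?_⟩
    have h1 : G.dist u r ≤ q.length := G.dist_le q
    have h2 : q.length + 1 = G.dist v r := by
      simpa using hp
    have h3 : G.dist v r ≤ G.dist u r + 1 := by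
      have htri := hG.dist_triangle (u := v) (v := u) (w := r)
      have hone : G.dist v u = 1 := SimpleGraph.dist_eq_one_iff_adj.2 h
      omega
    omega

lemma connected_card_le_edges {α : Type} [Fintype α] (G : SimpleGraph α)
    (hG : G.Connected) : Fintype.card α ≤ G.edgeSet.ncard + 1 := by
  obtain ⟨r⟩ := hG.nonempty
  have hch : ∀ v : α, v ≠ r → ∃ u : α, G.Adj v u ∧ G.dist u r + 1 = G.dist v r :=
    fun v hv => exists_dist_step G hG r hv
  classical
  choose nb hnb1 hnb2 using hch
  set S : Set α := {v | v ≠ r} with hS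
  set φ : α → Sym2 α := fun v => if h : v ≠ r then s(v, nb v h) else s(v, v) with hφ
  have hinj : Set.InjOn φ S := by
    intro v hv w hw heq
    have hv' : v ≠ r := hv
    have hw' : w ≠ r := hw
    simp only [hφ] at heq
    rw [dif_pos hv', dif_pos hw', Sym2.eq_iff] at heq
    rcases heq with ⟨h1, _⟩ | ⟨h1, h2⟩
    · exact h1
    · exfalso
      have e1 := hnb2 v hv'
      have e2 := hnb2 w hw'
      rw [← h1] at e2
      rw [h2] at e1
      omega
  have hsub : φ '' S ⊆ G.edgeSet := by
    rintro e ⟨v, hv, rfl⟩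
    have hv' : v ≠ r := hv
    simp only [hφ]
    rw [dif_pos hv']
    exact (hnb1 v hv')
  have h1 : S.ncard ≤ G.edgeSet.ncard := by
    rw [← Set.ncard_image_of_injOn hinj]
    exact Set.ncard_le_ncard hsub (Set.toFinite _)
  have h2 : S.ncard = Fintype.card α - 1 := by
    have : S = {r}ᶜ := by ext v; simp [hS]
    rw [this]
    rw [Set.ncard_eq_toFinset_card', Set.toFinset_compl, Finset.card_compl]
    simp
  have hpos : 1 ≤ Fintype.card α := Fintype.card_pos_iff.2 ⟨r⟩
  omega

end GraphCounting
section CliqueTree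

open XTree

variable {X V : Type} [Fintype X] [Fintype V] [LinearOrder X]

/-- The clique intersection graph on interior vertices. -/
def cliqueGraph (T : XTree X V) (f : Set X → X) : SimpleGraph {v : V // T.Interior v} where
  Adj v w := v ≠ w ∧ ∃ z : X, z ∈ Mset T f v.1 ∧ z ∈ Mset T f w.1
  symm := by constructor; rintro v w ⟨h, z, h1, h2⟩; exact ⟨h.symm, z, h2, h1⟩
  loopless := ⟨fun v h => h.1 rfl⟩

variable {T : XTree X V} {f : Set X → X}

lemma H_step (hph : T.IsPhylo) (hf : IsClusterMarker T f) {x : X}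
    {v w : {v : V // T.Interior v}} (hxv : x ∈ Mset T f v.1) (hxw : x ∈ Mset T f w.1) :
    (cliqueGraph T f).Reachable v w := by
  by_cases h : v = w
  · exact h ▸ SimpleGraph.Reachable.refl v
  · exact SimpleGraph.Adj.reachable ⟨h, x, hxv, hxw⟩

lemma H_reach_walk (hph : T.IsPhylo) (hf : IsClusterMarker T f) :
    ∀ {x y : X} (p : (cordGraph (lassoFull T f)).Walk x y)
      (v w : {v : V // T.Interior v}),
      x ∈ Mset T f v.1 → y ∈ Mset T f w.1 → (cliqueGraph T f).Reachable v w := by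
  intro x y p
  induction p with
  | nil => exact fun v w hxv hyw => H_step hph hf hxv hyw
  | cons h p ih =>
    intro v w hxv hyw
    obtain ⟨u, hu, h1, h2⟩ := adj_mem_Mset h
    exact (H_step hph hf hxv h1).trans (ih ⟨u, hu⟩ w h2 hyw)

lemma H_connected (hph : T.IsPhylo) (hf : IsClusterMarker T f) :
    (cliqueGraph T f).Connected := by
  haveI : Nonempty {v : V // T.Interior v} := ⟨⟨T.root, T.root_interior hph⟩⟩
  refine SimpleGraph.Connected.mk ?_
  intro v w
  obtain ⟨a, _, ha, _, _⟩ := Mset_nonempty hph hf v.2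
  obtain ⟨b, _, hb, _, _⟩ := Mset_nonempty hph hf w.2
  obtain ⟨p⟩ := gamma_preconnected hph hf a b
  exact H_reach_walk hph hf p v w ha hb

lemma delete_edge_connected {α : Type} (G : SimpleGraph α) {v₀ w₀ : α} (hG : G.Connected)
    (hr : (G \ SimpleGraph.fromEdgeSet {s(v₀, w₀)}).Reachable v₀ w₀) :
    (G \ SimpleGraph.fromEdgeSet {s(v₀, w₀)}).Connected := by
  haveI hne : Nonempty α := hG.nonempty
  have hstep : ∀ {a b : α}, G.Adj a b →
      (G \ SimpleGraph.fromEdgeSet {s(v₀, w₀)}).Reachable a b := by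
    intro a b hab
    by_cases he : s(a, b) = s(v₀, w₀)
    · rw [Sym2.eq_iff] at he
      rcases he with ⟨rfl, rfl⟩ | ⟨rfl, rfl⟩
      · exact hr
      · exact hr.symm
    · apply SimpleGraph.Adj.reachable
      simp only [SimpleGraph.sdiff_adj, SimpleGraph.fromEdgeSet_adj]
      exact ⟨hab, fun hmem => he (by simpa using hmem.1)⟩
  refine SimpleGraph.Connected.mk ?_
  intro a b
  obtain ⟨p⟩ := hG.preconnected a b
  induction p with
  | nil => rfl
  | cons h p ih => exact (hstep h).trans ih

lemma deleted_edgeSet {α : Type} (G : SimpleGraph α) {v w : α} (hadj : G.Adj v w) :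
    (G \ SimpleGraph.fromEdgeSet {s(v, w)}).edgeSet = G.edgeSet \ {s(v, w)} := by
  ext e
  simp only [SimpleGraph.edgeSet_sdiff, SimpleGraph.edgeSet_fromEdgeSet, Set.mem_diff,
    Set.mem_singleton_iff, Set.mem_setOf_eq]
  constructor
  · rintro ⟨he, hne⟩
    refine ⟨he, fun h => hne ⟨h, ?_⟩⟩
    rw [h]
    exact Sym2.mk_isDiag_iff.not.2 hadj.ne
  · rintro ⟨he, hne⟩
    exact ⟨he, fun h => hne h.1⟩

lemma not_reachable_delete_edge {α : Type} [Fintype α] (G : SimpleGraph α)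
    (hG : G.Connected) (hcard : Fintype.card α = G.edgeSet.ncard + 1) {v w : α}
    (hadj : G.Adj v w) : ¬ (G \ SimpleGraph.fromEdgeSet {s(v, w)}).Reachable v w := by
  intro hr
  have hconn' := delete_edge_connected G hG hr
  have hle := connected_card_le_edges _ hconn'
  rw [deleted_edgeSet G hadj] at hle
  have hmem : s(v, w) ∈ G.edgeSet := hadj
  have hcount : (G.edgeSet \ {s(v, w)}).ncard + 1 = G.edgeSet.ncard := by
    rw [Set.ncard_diff_singleton_add_one hmem (Set.toFinite _)]
  omega

end CliqueTree
section CliqueTreeCount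

open XTree

variable {X V : Type} [Fintype X] [Fintype V] [LinearOrder X] {T : XTree X V} {f : Set X → X}

lemma desc_leaf_pos {c : V} (hic : T.Interior c) {z : X} (hz : z ∈ T.leafSet c) :
    ∃ k, 1 ≤ k ∧ T.parent^[k] (T.leaf z) = c := by
  obtain ⟨k, hk⟩ := hz
  rcases Nat.eq_zero_or_pos k with h0 | h0
  · rw [h0, Function.iterate_zero_apply] at hk
    exact absurd ⟨z, hk⟩ hic
  · exact ⟨k, h0, hk⟩

lemma up_path {c : V} (hic : T.Interior c) {z : X} (hz : z ∈ T.leafSet c) :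
    ∃ m, 1 ≤ m ∧ T.parent^[m] (T.parent (T.leaf z)) = T.parent c := by
  obtain ⟨k, hk1, hk2⟩ := desc_leaf_pos hic hz
  refine ⟨k, hk1, ?_⟩
  rw [← Function.iterate_succ_apply, Function.iterate_succ_apply', hk2]

lemma pz_ne_q {c : V} (hcr : c ≠ T.root) (hic : T.Interior c) {z : X}
    (hz : z ∈ T.leafSet c) : T.parent (T.leaf z) ≠ T.parent c := by
  intro heq
  obtain ⟨m, hm1, hm2⟩ := up_path hic hz
  rw [← heq] at hm2
  have hroot : T.parent (T.leaf z) = T.root := T.eq_root_of_iterate_fixed hm1 hm2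
  obtain ⟨k, hk1, hk2⟩ := desc_leaf_pos hic hz
  have hc : T.parent^[k - 1] (T.parent (T.leaf z)) = c := by
    rw [← Function.iterate_succ_apply, show (k - 1).succ = k from by omega, hk2]
  rw [hroot, T.parent_iterate_root] at hc
  exact hcr hc.symm

lemma Mset_mem_interior_child (hf : IsClusterMarker T f) {c : V} (hcr : c ≠ T.root)
    (hic : T.Interior c) : f (T.leafSet c) ∈ Mset T f (T.parent c) :=
  ⟨c, T.mem_children_parent hcr, Or.inr ⟨hic, rfl⟩⟩

lemma cluster_edge_adj (hph : T.IsPhylo) (hf : IsClusterMarker T f) {c : V}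
    (hic : T.Interior c) (hcr : c ≠ T.root) :
    (cliqueGraph T f).Adj
      ⟨T.parent (T.leaf (f (T.leafSet c))), T.interior_parent (T.leaf_ne_root hph _)⟩
      ⟨T.parent c, T.interior_parent hcr⟩ := by
  have hz : f (T.leafSet c) ∈ T.leafSet c := f_mem hf ⟨c, hcr, hic, rfl⟩
  refine ⟨?_, f (T.leafSet c), Mset_mem_of_leaf_child hph _,
    Mset_mem_interior_child hf hcr hic⟩
  intro h
  exact pz_ne_q hcr hic hz (congrArg Subtype.val h)

lemma H_edge_card (hph : T.IsPhylo) (hf : IsClusterMarker T f) :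
    (cliqueGraph T f).edgeSet.ncard =
      Fintype.card {c : V // T.Interior c ∧ c ≠ T.root} := by
  rw [← Nat.card_coe_set_eq, ← Nat.card_eq_fintype_card]
  refine Nat.card_congr (Equiv.ofBijective
    (fun c => (⟨s(⟨T.parent (T.leaf (f (T.leafSet c.1))),
        T.interior_parent (T.leaf_ne_root hph _)⟩,
        ⟨T.parent c.1, T.interior_parent c.2.2⟩),
      (SimpleGraph.mem_edgeSet _).2 (cluster_edge_adj hph hf c.2.1 c.2.2)⟩ :
        (cliqueGraph T f).edgeSet))
    ⟨?_, ?_⟩).symm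
  · -- injective
    rintro ⟨c, hic, hcr⟩ ⟨c', hic', hcr'⟩ heq
    rw [Subtype.mk.injEq, Sym2.eq_iff] at heq
    have hzc : f (T.leafSet c) ∈ T.leafSet c := f_mem hf ⟨c, hcr, hic, rfl⟩
    have hzc' : f (T.leafSet c') ∈ T.leafSet c' := f_mem hf ⟨c', hcr', hic', rfl⟩
    rcases heq with ⟨h1, h2⟩ | ⟨h1, h2⟩
    · have hpz : T.parent (T.leaf (f (T.leafSet c))) =
          T.parent (T.leaf (f (T.leafSet c'))) := congrArg Subtype.val h1
      have hq : T.parent c = T.parent c' := congrArg Subtype.val h2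
      have hne : T.parent (T.leaf (f (T.leafSet c))) ≠ T.parent c :=
        pz_ne_q hcr hic hzc
      have hmem1 := Mset_mem_of_leaf_child (T := T) (f := f) hph (f (T.leafSet c))
      have hmem2 := Mset_mem_interior_child hf hcr hic
      have hmem1' := Mset_mem_of_leaf_child (T := T) (f := f) hph (f (T.leafSet c'))
      have hmem2' := Mset_mem_interior_child hf hcr' hic'
      rw [← hpz] at hmem1'
      rw [← hq] at hmem2'
      have hzz := Mset_shared_unique hph hf hne hmem1 hmem2 hmem1' hmem2'
      exact Subtype.ext (interior_cluster_unique hph hf hcr hcr' hic hic' hzz)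
    · exfalso
      have hpz : T.parent (T.leaf (f (T.leafSet c))) = T.parent c' :=
        congrArg Subtype.val h1
      have hq : T.parent c = T.parent (T.leaf (f (T.leafSet c'))) :=
        congrArg Subtype.val h2
      obtain ⟨m, hm1, hm2⟩ := up_path hic hzc
      obtain ⟨m', hm1', hm2'⟩ := up_path hic' hzc'
      rw [← hq] at hm2'
      rw [← hpz] at hm2'
      exact no_parent_cycle (pz_ne_q hcr hic hzc) hm2 hm2'
  · -- surjective
    rintro ⟨e, he⟩
    induction e using Sym2.ind with
    | _ v w =>
      obtain ⟨hne, z, hzv, hzw⟩ := (SimpleGraph.mem_edgeSet _).1 he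
      rcases Mset_cases hf hzv with hv' | ⟨c, hc, hic, hfc, _⟩
      · rcases Mset_cases hf hzw with hw' | ⟨c, hc, hic, hfc, _⟩
        · exact absurd (Subtype.ext (hv'.trans hw'.symm)) hne
        · refine ⟨⟨c, hic, T.child_ne_root hc⟩,
            Subtype.ext (Sym2.eq_iff.2 (Or.inl ⟨Subtype.ext ?_, Subtype.ext ?_⟩))⟩
          · rw [hfc]; exact hv'.symm
          · exact hc.1
      · rcases Mset_cases hf hzw with hw' | ⟨c', hc', hic', hfc', _⟩
        · refine ⟨⟨c, hic, T.child_ne_root hc⟩,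
            Subtype.ext (Sym2.eq_iff.2 (Or.inr ⟨Subtype.ext ?_, Subtype.ext ?_⟩))⟩
          · rw [hfc]; exact hw'.symm
          · exact hc.1
        · exfalso
          have hcc : c = c' := interior_cluster_unique hph hf (T.child_ne_root hc)
            (T.child_ne_root hc') hic hic' (hfc.trans hfc'.symm)
          exact hne (Subtype.ext (by rw [← hc.1, ← hc'.1, hcc]))

lemma card_interior (hph : T.IsPhylo) :
    Fintype.card {v : V // T.Interior v} =
      Fintype.card {c : V // T.Interior c ∧ c ≠ T.root} + 1 := by
  rw [← Fintype.card_option]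
  refine Fintype.card_congr
    ⟨fun v => if h : v.1 = T.root then none else some ⟨v.1, v.2, h⟩,
     fun o => o.elim ⟨T.root, T.root_interior hph⟩ (fun c => ⟨c.1, c.2.1⟩), ?_, ?_⟩
  · intro v
    by_cases h : v.1 = T.root
    · simp only [dif_pos h, Option.elim]
      exact Subtype.ext h.symm
    · simp only [dif_neg h, Option.elim]
  · intro o
    cases o with
    | none => simp
    | some c =>
      have : c.1 ≠ T.root := c.2.2
      simp [this]

lemma H_card (hph : T.IsPhylo) (hf : IsClusterMarker T f) :
    Fintype.card {v : V // T.Interior v} = (cliqueGraph T f).edgeSet.ncard + 1 := by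
  rw [card_interior hph, H_edge_card hph hf]

end CliqueTreeCount
section Separation

open XTree

variable {X V : Type} [Fintype X] [Fintype V] [LinearOrder X] {T : XTree X V} {f : Set X → X}

lemma separation (hph : T.IsPhylo) (hf : IsClusterMarker T f) {z : X} {p q : V}
    (hp : T.Interior p) (hq : T.Interior q) (hpq : p ≠ q)
    (hzp : z ∈ Mset T f p) (hzq : z ∈ Mset T f q) {S : Set X} (hzS : z ∉ S)
    {x y : ↥S} (hx : x.1 ∈ Mset T f p) (hy : y.1 ∈ Mset T f q)
    (hr : ((cordGraph (lassoFull T f)).induce S).Reachable x y) : False := by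
  set H := cliqueGraph T f with hH
  set P : {v : V // T.Interior v} := ⟨p, hp⟩ with hP
  set Q : {v : V // T.Interior v} := ⟨q, hq⟩ with hQ
  have hPQ : P ≠ Q := fun h => hpq (congrArg Subtype.val h)
  have hadj : H.Adj P Q := ⟨hPQ, z, hzp, hzq⟩
  have hbridge := not_reachable_delete_edge H (H_connected hph hf) (H_card hph hf) hadj
  apply hbridge
  have hstep : ∀ {a : X}, a ≠ z → ∀ (v w : {v : V // T.Interior v}),
      a ∈ Mset T f v.1 → a ∈ Mset T f w.1 →
      (H \ SimpleGraph.fromEdgeSet {s(P, Q)}).Reachable v w := by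
    intro a haz v w hav haw
    by_cases hvw : v = w
    · exact hvw ▸ SimpleGraph.Reachable.refl v
    · apply SimpleGraph.Adj.reachable
      simp only [SimpleGraph.sdiff_adj, SimpleGraph.fromEdgeSet_adj]
      refine ⟨⟨hvw, a, hav, haw⟩, ?_⟩
      rintro ⟨hmem, -⟩
      rw [Set.mem_singleton_iff, Sym2.eq_iff] at hmem
      rcases hmem with ⟨rfl, rfl⟩ | ⟨rfl, rfl⟩
      · exact haz (Mset_shared_unique hph hf hpq hav haw hzp hzq)
      · exact haz (Mset_shared_unique hph hf (Ne.symm hpq) hav haw hzq hzp)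
  have key : ∀ (x y : ↥S) (W : ((cordGraph (lassoFull T f)).induce S).Walk x y)
      (v w : {v : V // T.Interior v}), x.1 ∈ Mset T f v.1 → y.1 ∈ Mset T f w.1 →
      (H \ SimpleGraph.fromEdgeSet {s(P, Q)}).Reachable v w := by
    intro x y W
    induction W with
    | nil =>
      rename_i x'
      intro v w hxv hxw
      exact hstep (fun h => hzS (h ▸ x'.2)) v w hxv hxw
    | cons h W ih =>
      rename_i x' m' _
      intro v w hxv hyw
      have h' : (cordGraph (lassoFull T f)).Adj x'.1 m'.1 := h
      obtain ⟨u, hu, h1, h2⟩ := adj_mem_Mset h'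
      exact (hstep (fun hh => hzS (hh ▸ x'.2)) v ⟨u, hu⟩ hxv h1).trans
        (ih ⟨u, hu⟩ w h2 hyw)
  obtain ⟨W⟩ := hr
  exact key x y W P Q hx hy

end Separation
section Blocks

open XTree

variable {X V : Type} [Fintype X] [Fintype V] [LinearOrder X] {T : XTree X V} {f : Set X → X}

lemma Mset_isClique {v : V} (hv : T.Interior v) :
    (cordGraph (lassoFull T f)).IsClique (Mset T f v) :=
  fun _ ha _ hb hab => Mset_clique_adj hv ha hb hab

lemma clique_induce_connected {S : Set X} (hS : S.Nonempty)
    (hclique : (cordGraph (lassoFull T f)).IsClique S) :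
    ((cordGraph (lassoFull T f)).induce S).Connected := by
  haveI : Nonempty ↥S := hS.to_subtype
  refine SimpleGraph.Connected.mk ?_
  intro a b
  by_cases h : a = b
  · exact h ▸ SimpleGraph.Reachable.refl a
  · refine SimpleGraph.Adj.reachable ?_
    have hne : a.1 ≠ b.1 := fun hh => h (Subtype.ext hh)
    exact hclique a.2 b.2 hne

lemma clique_goodSet {S : Set X} (hS : S.Nonempty)
    (hclique : (cordGraph (lassoFull T f)).IsClique S) :
    GoodSet (cordGraph (lassoFull T f)) S :=
  ⟨hS, clique_induce_connected hS hclique,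
    fun _ _ hne => clique_induce_connected hne (hclique.subset Set.diff_subset)⟩

lemma Mset_goodSet (hph : T.IsPhylo) (hf : IsClusterMarker T f) {v : V}
    (hv : T.Interior v) : GoodSet (cordGraph (lassoFull T f)) (Mset T f v) := by
  obtain ⟨a, b, ha, hb, hab⟩ := Mset_nonempty hph hf hv
  exact clique_goodSet ⟨a, ha⟩ (Mset_isClique hv)

lemma first_edge {B : Set X} :
    ∀ {st tt : ↥B} (_ : ((cordGraph (lassoFull T f)).induce B).Walk st tt)
      (_ : st ≠ tt), ∃ c1 c2 : ↥B, (cordGraph (lassoFull T f)).Adj c1.1 c2.1 := by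
  intro st tt W
  induction W with
  | nil => exact fun h => absurd rfl h
  | cons h W ih =>
    rename_i s' m' unusedih
    exact fun _ => ⟨s', m', h⟩

lemma walk_flip {B : Set X} {v : V} :
    ∀ {st tt : ↥B} (_ : ((cordGraph (lassoFull T f)).induce B).Walk st tt)
      (_ : st.1 ∈ Mset T f v) (_ : tt.1 ∉ Mset T f v),
      ∃ b1 b2 : ↥B, (cordGraph (lassoFull T f)).Adj b1.1 b2.1 ∧
        b1.1 ∈ Mset T f v ∧ b2.1 ∉ Mset T f v := by
  intro st tt W
  induction W with
  | nil => exact fun hs ht => absurd hs ht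
  | cons h W ih =>
    rename_i s' m' unusedih
    intro hs ht
    by_cases hm : m'.1 ∈ Mset T f v
    · exact ih hm ht
    · exact ⟨s', m', h, hs, hm⟩

lemma good_subset_Mset (hph : T.IsPhylo) (hf : IsClusterMarker T f) {B : Set X}
    (hB : GoodSet (cordGraph (lassoFull T f)) B) {x y : X} (hx : x ∈ B) (hy : y ∈ B)
    (hadj : (cordGraph (lassoFull T f)).Adj x y) {v : V} (hv : T.Interior v)
    (hxv : x ∈ Mset T f v) (hyv : y ∈ Mset T f v) : B ⊆ Mset T f v := by
  intro u hu
  by_contra huv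
  -- find a flip edge
  obtain ⟨W⟩ := hB.2.1.preconnected ⟨x, hx⟩ ⟨u, hu⟩
  obtain ⟨b1, b2, hb, hb1, hb2⟩ := walk_flip W hxv huv
  set z : X := b1.1 with hzdef
  obtain ⟨w, hw, hzw, hb2w⟩ := adj_mem_Mset hb
  have hvw : v ≠ w := fun h => hb2 (h ▸ hb2w)
  -- z is a cut vertex candidate
  have hzB : z ∈ B := b1.2
  have hb2z : b2.1 ≠ z := fun h => hb2 (h ▸ hb1)
  have hSne : (B \ {z}).Nonempty := ⟨b2.1, b2.2, hb2z⟩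
  have hconn := hB.2.2 z hzB hSne
  -- pick x' ∈ Mset v ∩ B, x' ≠ z
  obtain ⟨x', hx'B, hx'v, hx'z⟩ : ∃ x', x' ∈ B ∧ x' ∈ Mset T f v ∧ x' ≠ z := by
    by_cases hxz : x = z
    · exact ⟨y, hy, hyv, fun h => hadj.ne (hxz ▸ h ▸ rfl)⟩
    · exact ⟨x, hx, hxv, hxz⟩
  have hzS : z ∉ B \ {z} := fun h => h.2 rfl
  obtain ⟨Wr⟩ := hconn.preconnected ⟨x', hx'B, hx'z⟩ ⟨b2.1, b2.2, hb2z⟩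
  exact separation hph hf hv hw hvw hb1 hzw hzS hx'v hb2w ⟨Wr⟩

lemma block_eq_Mset (hph : T.IsPhylo) (hf : IsClusterMarker T f) {B : Set X}
    (hB : IsBlock (cordGraph (lassoFull T f)) B) :
    ∃ v : V, T.Interior v ∧ B = Mset T f v := by
  obtain ⟨a, ha⟩ := hB.1.1
  by_cases hsing : ∃ b ∈ B, b ≠ a
  · -- B has two elements, hence an edge
    obtain ⟨b, hb, hba⟩ := hsing
    obtain ⟨W⟩ := hB.1.2.1.preconnected ⟨a, ha⟩ ⟨b, hb⟩
    obtain ⟨c1, c2, hadj⟩ := first_edge W (fun h => hba (congrArg Subtype.val h).symm)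
    obtain ⟨v, hv, h1, h2⟩ := adj_mem_Mset hadj
    have hsub : B ⊆ Mset T f v :=
      good_subset_Mset hph hf hB.1 c1.2 c2.2 hadj hv h1 h2
    exact ⟨v, hv, hB.2 (Mset T f v) (Mset_goodSet hph hf hv) hsub⟩
  · -- B = {a}; contradiction with maximality
    exfalso
    push_neg at hsing
    have hBa : B = {a} := Set.eq_singleton_iff_unique_mem.2 ⟨ha, hsing⟩
    set v := T.parent (T.leaf a) with hvdef
    have hv : T.Interior v := T.interior_parent (T.leaf_ne_root hph a)
    have hmem : a ∈ Mset T f v := Mset_mem_of_leaf_child hph a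
    have hsub : B ⊆ Mset T f v := by rw [hBa]; simpa using hmem
    have := hB.2 (Mset T f v) (Mset_goodSet hph hf hv) hsub
    obtain ⟨c, d, hc, hd, hcd⟩ := Mset_nonempty hph hf hv
    rw [← this, hBa] at hc hd
    exact hcd (hc.trans hd.symm)

lemma Mset_eq_supp (hph : T.IsPhylo) (hf : IsClusterMarker T f) {v : V}
    (hv : T.Interior v) : Mset T f v = {x | ∃ c ∈ lassoAt T f v, x ∈ c} := by
  ext x
  constructor
  · rintro ⟨c₁, hc₁, hrel⟩
    obtain ⟨c₂, hc₂, hcc⟩ := T.exists_other_child hph hv hc₁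
    obtain ⟨b, hbrel⟩ := markRel_exists T f c₂
    exact ⟨{x, b}, ⟨c₁, c₂, hc₁, hc₂, fun h => hcc h.symm, x, b, hrel, hbrel, rfl⟩,
      by left; rfl⟩
  · rintro ⟨c, hc, hx⟩
    exact cord_mem_Mset hc hx

end Blocks
section Final

open XTree

variable {X V : Type} [Fintype X] [Fintype V] [LinearOrder X] {T : XTree X V} {f : Set X → X}

lemma gamma_clawfree (hph : T.IsPhylo) (hf : IsClusterMarker T f) :
    ClawFree (cordGraph (lassoFull T f)) := by
  rintro ⟨x0, a, b, c, hab, hac, hbc, hxa, hxb, hxc, hnab, hnac, hnbc⟩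
  obtain ⟨va, hva, hxva, hava⟩ := adj_mem_Mset hxa
  obtain ⟨vb, hvb, hxvb, hbvb⟩ := adj_mem_Mset hxb
  obtain ⟨vc, hvc, hxvc, hcvc⟩ := adj_mem_Mset hxc
  by_cases h1 : va = vb
  · exact hnab (Mset_clique_adj hva hava (show b ∈ Mset T f va by rw [h1]; exact hbvb) hab)
  by_cases h2 : va = vc
  · exact hnac (Mset_clique_adj hva hava (show c ∈ Mset T f va by rw [h2]; exact hcvc) hac)
  by_cases h3 : vb = vc
  · exact hnbc (Mset_clique_adj hvb hbvb (show c ∈ Mset T f vb by rw [h3]; exact hcvc) hbc)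
  exact Mset_at_most_two hph hf h1 h2 h3 hxva hxvb hxvc

lemma lasso_topo (hph : T.IsPhylo) (hf : IsClusterMarker T f) :
    T.IsTopoLasso (lassoFull T f) := by
  intro v c₁ c₂ hc₁ hc₂ hne
  obtain ⟨a, ha⟩ := markRel_exists T f c₁
  obtain ⟨b, hb⟩ := markRel_exists T f c₂
  exact ⟨a, b, markRel_mem_leafSet hf hc₁ ha, markRel_mem_leafSet hf hc₂ hb,
    ⟨v, T.interior_of_child hc₁, c₁, c₂, hc₁, hc₂, hne, a, b, ha, hb, rfl⟩⟩

lemma pair_eq_cases {a b a' b' : X} (hne : a' ≠ b') (h : ({a', b'} : Set X) = {a, b}) :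
    (a' = a ∧ b' = b) ∨ (a' = b ∧ b' = a) := by
  have ha : a' ∈ ({a, b} : Set X) := h ▸ (by left; rfl)
  have hb : b' ∈ ({a, b} : Set X) := h ▸ (by right; rfl)
  rcases ha with ha | ha
  · rcases hb with hb | hb
    · exact absurd (ha.trans hb.symm) hne
    · exact Or.inl ⟨ha, hb⟩
  · rcases hb with hb | hb
    · exact Or.inr ⟨ha, hb⟩
    · exact absurd (ha.trans hb.symm) hne

lemma cord_unique (hph : T.IsPhylo) (hf : IsClusterMarker T f) {v : V}
    (hv : T.Interior v) {c₁ c₂ : V}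
    (hc₁ : c₁ ∈ T.children v) (hc₂ : c₂ ∈ T.children v) (hne : c₁ ≠ c₂)
    {a' b' : X} (ha' : a' ∈ T.leafSet c₁) (hb' : b' ∈ T.leafSet c₂)
    (hmem : ({a', b'} : Set X) ∈ lassoFull T f) :
    ∃ a b : X, markRel T f c₁ a ∧ markRel T f c₂ b ∧ a' = a ∧ b' = b := by
  obtain ⟨u, hu, d₁, d₂, hd₁, hd₂, dne, aa, bb, haa, hbb, hset⟩ := hmem
  have hab' : a' ≠ b' := by
    intro h
    exact hne (T.children_eq_of_leafSet_inter hc₁ hc₂ ha' (h ▸ hb'))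
  have key : ∀ (d₁ d₂ : V), d₁ ∈ T.children u → d₂ ∈ T.children u → d₁ ≠ d₂ →
      ∀ aa bb : X, markRel T f d₁ aa → markRel T f d₂ bb → a' = aa → b' = bb →
      ∃ a b : X, markRel T f c₁ a ∧ markRel T f c₂ b ∧ a' = a ∧ b' = b := by
    intro d₁ d₂ hd₁ hd₂ dne aa bb haa hbb haeq hbeq
    have ha'd : a' ∈ T.leafSet d₁ := haeq ▸ markRel_mem_leafSet hf hd₁ haa
    have hb'd : b' ∈ T.leafSet d₂ := hbeq ▸ markRel_mem_leafSet hf hd₂ hbb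
    by_cases huv : u = v
    · subst huv
      have e1 : d₁ = c₁ := T.children_eq_of_leafSet_inter hd₁ hc₁ ha'd ha'
      have e2 : d₂ = c₂ := T.children_eq_of_leafSet_inter hd₂ hc₂ hb'd hb'
      exact ⟨aa, bb, e1 ▸ haa, e2 ▸ hbb, haeq, hbeq⟩
    · exfalso
      have hdva : T.Desc v (T.leaf a') :=
        T.desc_trans (T.desc_of_child hc₁) ha'
      have hdua : T.Desc u (T.leaf a') :=
        T.desc_trans (T.desc_of_child hd₁) ha'd
      rcases T.desc_total hdva hdua with h | h
      · -- Desc v u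
        obtain ⟨c, hc, hcu⟩ := T.exists_child_desc h huv
        have hsub : T.leafSet u ⊆ T.leafSet c := T.leafSet_subset_of_desc hcu
        have e1 : c = c₁ := T.children_eq_of_leafSet_inter hc hc₁
          (hsub (T.x_mem_leafSet_of_child hd₁ ha'd)) ha'
        have e2 : c = c₂ := T.children_eq_of_leafSet_inter hc hc₂
          (hsub (T.x_mem_leafSet_of_child hd₂ hb'd)) hb'
        exact hne (e1 ▸ e2)
      · -- Desc u v
        obtain ⟨d, hd, hdv⟩ := T.exists_child_desc h (fun hh => huv hh.symm)
        have hsub : T.leafSet v ⊆ T.leafSet d := T.leafSet_subset_of_desc hdv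
        have e1 : d₁ = d := T.children_eq_of_leafSet_inter hd₁ hd ha'd
          (hsub (T.x_mem_leafSet_of_child hc₁ ha'))
        have e2 : d₂ = d := T.children_eq_of_leafSet_inter hd₂ hd hb'd
          (hsub (T.x_mem_leafSet_of_child hc₂ hb'))
        exact dne (e1.trans e2.symm)
  rcases pair_eq_cases hab' hset with ⟨h1, h2⟩ | ⟨h1, h2⟩
  · exact key d₁ d₂ hd₁ hd₂ dne aa bb haa hbb h1 h2
  · exact key d₂ d₁ hd₂ hd₁ dne.symm bb aa hbb haa h1 h2

lemma lasso_minimal (hph : T.IsPhylo) (hf : IsClusterMarker T f) :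
    ∀ L' ⊆ lassoFull T f, T.IsTopoLasso L' → L' = lassoFull T f := by
  intro L' hsub htopo
  apply Set.Subset.antisymm hsub
  rintro e ⟨v, hv, c₁, c₂, hc₁, hc₂, hne, a, b, ha, hb, rfl⟩
  obtain ⟨a', b', ha', hb', hmem'⟩ := htopo v c₁ c₂ hc₁ hc₂ hne
  obtain ⟨aa, bb, haa, hbb, h1, h2⟩ :=
    cord_unique hph hf (T.interior_of_child hc₁) hc₁ hc₂ hne ha' hb' (hsub hmem')
  have e1 : a' = a := h1.trans (markRel_unique haa ha)
  have e2 : b' = b := h2.trans (markRel_unique hbb hb)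
  rw [← e1, ← e2]
  exact hmem'

end Final
/-- for a non-degenerate X-tree `T` and a cluster marker map `f`,
`Γ(L_{(T,f)})` is a connected claw-free block graph whose blocks are exactly of the
form `Γ(L_{(T,f)}(v))` for interior vertices `v`; i.e. `L_{(T,f)}` is a distinguished
minimal topological lasso for `T`. -/
theorem stmt16 {X V : Type} [Fintype X] [Fintype V] [LinearOrder X] (T : XTree X V)
    (hph : T.IsPhylo) (hX : 3 ≤ Fintype.card X) (hnd : T.NonDegenerate)
    (f : Set X → X) (hf : IsClusterMarker T f) :
    (cordGraph (lassoFull T f)).Connected ∧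
      IsBlockGraph (cordGraph (lassoFull T f)) ∧
      (∀ B : Set X, IsBlock (cordGraph (lassoFull T f)) B →
        ∃ v : V, T.Interior v ∧ B = {x | ∃ c ∈ lassoAt T f v, x ∈ c}) ∧
      ClawFree (cordGraph (lassoFull T f)) ∧
      T.IsMinTopoLasso (lassoFull T f) := by
  have hne : Nonempty X := Fintype.card_pos_iff.1 (by omega)
  refine ⟨gamma_connected hph hf hne, ?_, ?_, gamma_clawfree hph hf,
    lasso_topo hph hf, lasso_minimal hph hf⟩
  · intro B hB
    obtain ⟨v, hv, hBv⟩ := block_eq_Mset hph hf hB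
    rw [hBv]
    exact Mset_isClique hv
  · intro B hB
    obtain ⟨v, hv, hBv⟩ := block_eq_Mset hph hf hB
    exact ⟨v, hv, by rw [hBv, Mset_eq_supp hph hf hv]⟩
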